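/- Let R be a commutative ring, let σ denote the formal power series σ(T) = Σ_{k≥1} (-1)^k T^k in R[[T]], let f = Σ_k a_k T^k be a formal power series in R[[T]], and let g = f∘σ with coefficients g = Σ_k b_k T^k. Then b_0 = a_0, and for every k ≥ 1, b_k = (-1)^k·Σ_{i=0}^{k-1} binomial(k-1, i)·a_{i+1}. -/

import Mathlib

open PowerSeries Finset

/-- `σ(T) = Σ_{k≥1} (-1)^k T^k = (1+T)⁻¹ - 1`. -/
noncomputable def sigma (R : Type*) [Ring R] : PowerSeries R :=
  PowerSeries.mk fun k => if k = 0 then 0 else (-1) ^ k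

/-- Substitution `f ∘ g` of a power series `g` with zero constant term
into a power series `f`: the `n`-th coefficient is `Σ_{j≤n} fⱼ · coeff n (g^j)`. -/
noncomputable def PowerSeries.comp {R : Type*} [CommSemiring R]
    (f g : PowerSeries R) : PowerSeries R :=
  PowerSeries.mk fun n => ∑ j ∈ range (n + 1), coeff (R := R) j f * coeff (R := R) n (g ^ j)

/-- `τ(T) = Σ_{k≥1} T^k = T·(1-T)⁻¹`. -/
noncomputable def tau (R : Type*) [CommRing R] : PowerSeries R :=
  X * (invOneSubPow R 1).val

lemma invOneSubPow_one_pow (R : Type*) [CommRing R] (j : ℕ) :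
    (invOneSubPow R 1) ^ j = invOneSubPow R j := by
  rw [invOneSubPow_eq_inv_one_sub_pow, invOneSubPow_eq_inv_one_sub_pow, pow_one]

lemma coeff_tau_pow (R : Type*) [CommRing R] (j n : ℕ) (hj : 1 ≤ j) :
    coeff (R := R) n (tau R ^ j) = if j ≤ n then ((n-1).choose (j-1) : R) else 0 := by
  have : tau R ^ j = X ^ j * (invOneSubPow R j).val := by
    rw [tau, mul_pow, ← Units.val_pow_eq_pow_val, invOneSubPow_one_pow]
  rw [this, coeff_X_pow_mul', invOneSubPow_val_eq_mk_sub_one_add_choose_of_pos R j hj,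
    coeff_mk]
  by_cases h : j ≤ n
  · rw [if_pos h, if_pos h]
    congr 2
    omega
  · rw [if_neg h, if_neg h]

lemma sigma_eq (R : Type*) [CommRing R] : sigma R = rescale (-1) (tau R) := by
  ext n
  rw [coeff_rescale, sigma, coeff_mk, tau, invOneSubPow_val_succ_eq_mk_add_choose]
  rcases n with _ | m
  · simp
  · rw [coeff_succ_X_mul, coeff_mk]
    simp

lemma coeff_sigma_pow (R : Type*) [CommRing R] (j n : ℕ) (hj : 1 ≤ j) :
    coeff (R := R) n (sigma R ^ j)
      = if j ≤ n then (-1) ^ n * ((n-1).choose (j-1) : R) else 0 := by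
  rw [sigma_eq, ← RingHom.map_pow, coeff_rescale, coeff_tau_pow R j n hj]
  split <;> simp

/-- writing `f = Σ aₖ Tᵏ` and `f∘σ = Σ bₖ Tᵏ`, one has `b₀ = a₀` and
`bₖ = (-1)^k·Σ_{i=0}^{k-1} C(k-1, i)·a_{i+1}` for `k ≥ 1`. -/
theorem comp_sigma_coeff {R : Type*} [CommRing R] (f : PowerSeries R) :
    coeff (R := R) 0 (f.comp (sigma R)) = coeff (R := R) 0 f ∧
    ∀ k, 1 ≤ k →
      coeff (R := R) k (f.comp (sigma R))
        = (-1) ^ k * ∑ i ∈ range k, ((k - 1).choose i : R) * coeff (R := R) (i + 1) f := by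
  constructor
  · simp [PowerSeries.comp]
  · intro k hk
    rw [PowerSeries.comp, coeff_mk, Finset.sum_range_succ']
    rw [pow_zero, coeff_one, if_neg (by omega), mul_zero, add_zero, Finset.mul_sum]
    apply Finset.sum_congr rfl
    intro i hi
    rw [Finset.mem_range] at hi
    rw [coeff_sigma_pow R (i+1) k (by omega), if_pos (by omega)]
    have : (i + 1 - 1) = i := by omega
    rw [this]
    ring
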